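/- arXiv:1005.3934 — 2 statements merged into one kernel-verified Lean document; each statement's English description precedes it below -/
import Mathlib

section
/- For every real q>1, every n≥1, every m≥1 and every x∈[0,∞), the moments admit the explicit representation M_{n,q}(t^m;x) = ∑_{j=1}^{m} S_q(m,j) x^j/[n]_q^{m−j}, where S_q are the q-Stirling-type numbers defined by the recurrence below. In particular, M_{n,q}(t^m;x) is a polynomial in x of degree m without a constant term. -/
open scoped BigOperators

/-- The `q`-integer `[k]_q = (q^k - 1)/(q - 1)`. -/
noncomputable def qNat (q : ℝ) (k : ℕ) : ℝ := (q ^ k - 1) / (q - 1)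

/-- The `q`-factorial `[k]_q! = [1]_q [2]_q ⋯ [k]_q`, with `[0]_q! = 1`. -/
noncomputable def qFactorial (q : ℝ) : ℕ → ℝ
  | 0 => 1
  | k + 1 => qFactorial q k * qNat q (k + 1)

/-- The `q`-exponential function `e_q(z) = ∑_{k=0}^∞ z^k/[k]_q!`. -/
noncomputable def qExp (q z : ℝ) : ℝ := ∑' k : ℕ, z ^ k / qFactorial q k

/-- The `q`-Szász basis function
`s_{n,k}(q;x) = q^{-k(k-1)/2} ([n]_q^k x^k/[k]_q!) e_q(-[n]_q q^{-k} x)`. -/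
noncomputable def qSzaszBasis (q : ℝ) (n k : ℕ) (x : ℝ) : ℝ :=
  (q ^ (k * (k - 1) / 2))⁻¹ * (qNat q n ^ k * x ^ k / qFactorial q k) *
    qExp q (-(qNat q n) * q ^ (-(k : ℤ)) * x)

/-- The `q`-Szász operator `M_{n,q}(f;x) = ∑_{k=0}^∞ f([k]_q/[n]_q) s_{n,k}(q;x)`. -/
noncomputable def qSzasz (q : ℝ) (n : ℕ) (f : ℝ → ℝ) (x : ℝ) : ℝ :=
  ∑' k : ℕ, f (qNat q k / qNat q n) * qSzaszBasis q n k x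

/-- The weight `w_0(x) = 1`, `w_p(x) = (1 + x^p)⁻¹` for `p ≥ 1`. -/
noncomputable def weight (p : ℕ) (x : ℝ) : ℝ := if p = 0 then 1 else (1 + x ^ p)⁻¹

/-- The weighted sup-norm `‖f‖_p = sup_{x ≥ 0} w_p(x)|f(x)|`. -/
noncomputable def wnorm (p : ℕ) (f : ℝ → ℝ) : ℝ :=
  ⨆ x : Set.Ici (0 : ℝ), weight p x.1 * |f x.1|

/-- Membership in the space `C_p`: `f` is continuous on `[0,∞)` and `w_p f` is
uniformly continuous and bounded on `[0,∞)`. -/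
def MemCp (p : ℕ) (f : ℝ → ℝ) : Prop :=
  ContinuousOn f (Set.Ici 0) ∧
  UniformContinuousOn (fun x => weight p x * f x) (Set.Ici 0) ∧
  ∃ M : ℝ, ∀ x ∈ Set.Ici (0 : ℝ), |weight p x * f x| ≤ M

/-- The second difference `Δ_h² f(x) = f(x+2h) - 2f(x+h) + f(x)`. -/
noncomputable def delta2 (f : ℝ → ℝ) (h x : ℝ) : ℝ := f (x + 2 * h) - 2 * f (x + h) + f x

/-- The second modulus of smoothness `ω_p²(f;δ) = sup_{0<h≤δ} ‖Δ_h² f‖_p`. -/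
noncomputable def omega2 (p : ℕ) (f : ℝ → ℝ) (δ : ℝ) : ℝ :=
  ⨆ h : {h : ℝ // 0 < h ∧ h ≤ δ}, wnorm p (fun x => delta2 f h.1 x)

/-- The (first) modulus of continuity on `[0,∞)`:
`ω(g;δ) = sup {|g(s)-g(t)| : s,t ≥ 0, |s-t| ≤ δ}`. -/
noncomputable def omega1 (g : ℝ → ℝ) (δ : ℝ) : ℝ :=
  sSup {d : ℝ | ∃ s t : ℝ, 0 ≤ s ∧ 0 ≤ t ∧ |s - t| ≤ δ ∧ d = |g s - g t|}

/-- The `q`-derivative `(D_q g)(x) = (g(qx) - g(x))/((q-1)x)`. -/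
noncomputable def qDeriv (q : ℝ) (g : ℝ → ℝ) (x : ℝ) : ℝ := (g (q * x) - g x) / ((q - 1) * x)

/-- The `q`-Stirling-type numbers: `S_q(0,0)=1`, `S_q(m,0)=0` for `m>0`,
`S_q(m,j)=0` for `m<j`, and `S_q(m+1,j)=[j]_q S_q(m,j) + S_q(m,j-1)`. -/
noncomputable def qStirling (q : ℝ) : ℕ → ℕ → ℝ
  | 0, 0 => 1
  | 0, _ + 1 => 0
  | _ + 1, 0 => 0
  | m + 1, j + 1 => qNat q (j + 1) * qStirling q m (j + 1) + qStirling q m j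

section TriNat

lemma two_dvd_mul_pred (k : ℕ) : 2 ∣ k * (k - 1) := by
  rcases k with _ | l
  · simp
  · simpa [Nat.mul_comm] using (Nat.even_mul_succ_self l).two_dvd

lemma two_dvd_mul_succ (k : ℕ) : 2 ∣ k * (k + 1) := (Nat.even_mul_succ_self k).two_dvd

lemma tri_succ (k : ℕ) : (k+1) * (k+1+1) / 2 = k * (k+1) / 2 + (k+1) := by
  apply Nat.eq_of_mul_eq_mul_left (show 0 < 2 by norm_num)
  conv_rhs => rw [Nat.mul_add, Nat.mul_div_cancel' (two_dvd_mul_succ k)]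
  rw [Nat.mul_div_cancel' (two_dvd_mul_succ (k+1))]
  ring

lemma tri_succ' (k : ℕ) : (k+1) * (k+1-1) / 2 = k * (k-1) / 2 + k := by
  simp only [Nat.add_sub_cancel]
  rcases k with _ | l
  · simp
  · simp only [Nat.add_sub_cancel]
    apply Nat.eq_of_mul_eq_mul_left (show 0 < 2 by norm_num)
    have h1 : 2 ∣ (l+1+1) * (l+1) := by
      rw [Nat.mul_comm]; exact (Nat.even_mul_succ_self (l+1)).two_dvd
    have h2 : 2 ∣ (l+1) * l := by
      rw [Nat.mul_comm]; exact (Nat.even_mul_succ_self l).two_dvd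
    conv_rhs => rw [Nat.mul_add, Nat.mul_div_cancel' h2]
    rw [Nat.mul_div_cancel' h1]
    ring

lemma tri_double (k : ℕ) : k * (k-1) / 2 + k * (k+1) / 2 = k * k := by
  apply Nat.eq_of_mul_eq_mul_left (show 0 < 2 by norm_num)
  conv_lhs => rw [Nat.mul_add, Nat.mul_div_cancel' (two_dvd_mul_pred k),
    Nat.mul_div_cancel' (two_dvd_mul_succ k)]
  rcases k with _ | l
  · simp
  · simp only [Nat.add_sub_cancel]
    ring

end TriNat

section QBasic

variable {q : ℝ}

lemma qM_q_pos (hq : 1 < q) : (0:ℝ) < q := lt_trans one_pos hq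
lemma qM_q_ne (hq : 1 < q) : q ≠ 0 := ne_of_gt (qM_q_pos hq)
lemma qM_pow_ne (hq : 1 < q) (a : ℕ) : q ^ a ≠ 0 := pow_ne_zero a (qM_q_ne hq)

lemma qNat_zero (q : ℝ) : qNat q 0 = 0 := by simp [qNat]

lemma qNat_nonneg (hq : 1 < q) (k : ℕ) : 0 ≤ qNat q k := by
  apply div_nonneg _ (by linarith)
  have : (1:ℝ) ≤ q ^ k := one_le_pow₀ hq.le
  linarith

lemma qNat_pos (hq : 1 < q) {k : ℕ} (hk : 1 ≤ k) : 0 < qNat q k := by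
  apply div_pos _ (by linarith)
  have : (1:ℝ) < q ^ k := one_lt_pow₀ hq (by omega)
  linarith

lemma qNat_ne (hq : 1 < q) {k : ℕ} (hk : 1 ≤ k) : qNat q k ≠ 0 := ne_of_gt (qNat_pos hq hk)

lemma qFactorial_succ (q : ℝ) (k : ℕ) : qFactorial q (k+1) = qFactorial q k * qNat q (k+1) := rfl

lemma qFactorial_pos (hq : 1 < q) (k : ℕ) : 0 < qFactorial q k := by
  induction k with
  | zero => norm_num [qFactorial]
  | succ l ih => rw [qFactorial_succ]; exact mul_pos ih (qNat_pos hq (by omega))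

lemma qFactorial_ne (hq : 1 < q) (k : ℕ) : qFactorial q k ≠ 0 := ne_of_gt (qFactorial_pos hq k)

lemma qNat_le (hq : 1 < q) (k : ℕ) : qNat q k ≤ q ^ k / (q - 1) := by
  rw [qNat]
  gcongr
  · linarith

lemma one_le_qNat_succ (hq : 1 < q) (k : ℕ) : 1 ≤ qNat q (k+1) := by
  rw [qNat, le_div_iff₀ (by linarith : (0:ℝ) < q - 1)]
  have h : q ≤ q ^ (k+1) := by
    calc q = q ^ 1 := (pow_one q).symm
    _ ≤ q ^ (k+1) := pow_le_pow_right₀ hq.le (by omega)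
  linarith

lemma pow_le_qNat_succ (hq : 1 < q) (k : ℕ) : q ^ k ≤ qNat q (k+1) := by
  rw [qNat, le_div_iff₀ (by linarith : (0:ℝ) < q - 1)]
  have : q ^ k * q = q ^ (k+1) := (pow_succ q k).symm
  nlinarith [one_le_pow₀ hq.le (n := k)]

lemma pow_helper (hq : q ≠ 0) {a b c d : ℕ} (h : a + d = c + b) :
    q ^ a * (q ^ b)⁻¹ = q ^ c * (q ^ d)⁻¹ := by
  have hb : q ^ b ≠ 0 := pow_ne_zero b hq
  have hd : q ^ d ≠ 0 := pow_ne_zero d hq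
  field_simp
  rw [← pow_add, ← pow_add, h]
  ring

lemma qNat_split (hq : 1 < q) {k N : ℕ} (hk : k ≤ N) :
    qNat q N = qNat q k + q ^ k * qNat q (N - k) := by
  have h : q ^ k * q ^ (N - k) = q ^ N := by rw [← pow_add]; congr 1; omega
  have h2 : qNat q k + q ^ k * qNat q (N - k)
      = (q ^ k - 1 + q ^ k * (q ^ (N - k) - 1)) / (q - 1) := by
    rw [qNat, qNat]; ring
  rw [h2, qNat]
  congr 1
  linear_combination -h

end QBasic


open Finset

/-- Auxiliary coefficient for the moment computation. -/
noncomputable def qA (q : ℝ) (N k : ℕ) : ℝ :=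
  (-1) ^ (N - k) * (q ^ (k * (k+1) / 2) * (q ^ (k * N))⁻¹) /
    (qFactorial q k * qFactorial q (N - k))

variable {q : ℝ}

lemma qA_top (hq : 1 < q) {N k : ℕ} (hk : k ≤ N) :
    qA q (N+1) k * (q ^ k * qNat q (N+1-k)) = - qA q N k := by
  have h1 : N + 1 - k = (N - k) + 1 := by omega
  rw [qA, qA, h1, pow_succ, qFactorial_succ]
  have hne1 : qNat q (N - k + 1) ≠ 0 := qNat_ne hq (by omega)
  have hne2 : qFactorial q k ≠ 0 := qFactorial_ne hq k
  have hne3 : qFactorial q (N - k) ≠ 0 := qFactorial_ne hq (N - k)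
  field_simp
  have hp : q ^ (k * (N+1)) = q ^ (k * N) * q ^ k := by
    have he : k * (N+1) = k * N + k := by ring
    rw [he, pow_add]
  rw [hp]
  ring

lemma qA_succ (hq : 1 < q) {N k : ℕ} (hk : k ≤ N) :
    qA q (N+1) (k+1) * qNat q (k+1) = qA q N k * (q ^ N)⁻¹ := by
  have h1 : N + 1 - (k + 1) = N - k := by omega
  rw [qA, qA, h1, qFactorial_succ, tri_succ]
  have hne1 : qNat q (k + 1) ≠ 0 := qNat_ne hq (by omega)
  have hne2 : qFactorial q k ≠ 0 := qFactorial_ne hq k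
  have hne3 : qFactorial q (N - k) ≠ 0 := qFactorial_ne hq (N - k)
  have hne4 : (q ^ N) ≠ 0 := qM_pow_ne hq N
  field_simp
  have hp1 : q ^ (k * (k+1) / 2 + (k+1)) = q ^ (k * (k+1) / 2) * q ^ (k+1) := pow_add q _ _
  have hp2 : q ^ ((k+1) * (N+1)) = q ^ (k * N) * q ^ N * q ^ (k+1) := by
    have he : (k+1) * (N+1) = k * N + N + (k+1) := by ring
    rw [he, pow_add, pow_add]
  rw [hp1, hp2]
  ring

lemma qA_diag (hq : 1 < q) : qA q 0 0 = 1 := by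
  simp [qA, qFactorial]

/-- Recurrence for the alternating sums `U N = ∑ qA q N k`. -/
lemma qU_rec (hq : 1 < q) (N : ℕ) :
    qNat q (N+1) * ∑ k ∈ range (N+2), qA q (N+1) k
      = ((q ^ N)⁻¹ - 1) * ∑ k ∈ range (N+1), qA q N k := by
  rw [Finset.mul_sum]
  have split : ∀ k ∈ range (N+2), qNat q (N+1) * qA q (N+1) k
      = qA q (N+1) k * qNat q k + qA q (N+1) k * (q ^ k * qNat q (N+1-k)) := by
    intro k hk
    have hk' : k ≤ N + 1 := by simpa using Nat.lt_succ_iff.mp (mem_range.mp hk)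
    rw [qNat_split hq hk']
    ring
  rw [Finset.sum_congr rfl split, Finset.sum_add_distrib]
  have e1 : ∑ k ∈ range (N+2), qA q (N+1) k * qNat q k
      = (q ^ N)⁻¹ * ∑ k ∈ range (N+1), qA q N k := by
    rw [Finset.sum_range_succ']
    simp only [qNat_zero, mul_zero, add_zero]
    rw [Finset.mul_sum]
    apply Finset.sum_congr rfl
    intro k hk
    have hk' : k ≤ N := Nat.lt_succ_iff.mp (mem_range.mp hk)
    rw [qA_succ hq hk']
    ring
  have e2 : ∑ k ∈ range (N+2), qA q (N+1) k * (q ^ k * qNat q (N+1-k))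
      = - ∑ k ∈ range (N+1), qA q N k := by
    rw [Finset.sum_range_succ]
    simp only [Nat.sub_self, qNat_zero, mul_zero, add_zero]
    rw [← Finset.sum_neg_distrib]
    apply Finset.sum_congr rfl
    intro k hk
    have hk' : k ≤ N := Nat.lt_succ_iff.mp (mem_range.mp hk)
    rw [qA_top hq hk']
  rw [e1, e2]
  ring

lemma qU_eq (hq : 1 < q) (N : ℕ) :
    ∑ k ∈ range (N+1), qA q N k = if N = 0 then 1 else 0 := by
  induction N with
  | zero => simp [qA_diag hq]
  | succ M ih =>
    have h := qU_rec hq M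
    rw [ih] at h
    have hne : qNat q (M+1) ≠ 0 := qNat_ne hq (by omega)
    have : ∑ k ∈ range (M+2), qA q (M+1) k
        = ((q ^ M)⁻¹ - 1) * (if M = 0 then (1:ℝ) else 0) / qNat q (M+1) := by
      field_simp at h ⊢
      linarith [h]
    rw [this]
    rcases Nat.eq_zero_or_pos M with hM | hM
    · subst hM; norm_num
    · simp [Nat.pos_iff_ne_zero.mp hM]

lemma qStirling_zero_right' (q : ℝ) (m : ℕ) : qStirling q (m+1) 0 = 0 := rfl

lemma qT_eq (hq : 1 < q) : ∀ (m N : ℕ),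
    ∑ k ∈ range (N+1), qA q N k * qNat q k ^ m = qStirling q m N := by
  intro m
  induction m with
  | zero =>
    intro N
    simp only [pow_zero, mul_one]
    rw [qU_eq hq]
    rcases N with _ | M
    · simp [qStirling]
    · simp [qStirling]
  | succ m ih =>
    intro N
    rcases N with _ | N
    · rw [Finset.sum_range_one, qNat_zero, zero_pow (by omega : m + 1 ≠ 0), mul_zero,
        qStirling_zero_right' q m]
    · have key : ∀ k ∈ range (N+2), qA q (N+1) k * qNat q k ^ (m+1)
          = qNat q (N+1) * (qA q (N+1) k * qNat q k ^ m)
            - qA q (N+1) k * (q ^ k * qNat q (N+1-k)) * qNat q k ^ m := by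
        intro k hk
        have hk' : k ≤ N + 1 := Nat.lt_succ_iff.mp (mem_range.mp hk)
        have hsplit : qNat q k = qNat q (N+1) - q ^ k * qNat q (N+1-k) := by
          rw [qNat_split hq hk']; ring
        calc qA q (N+1) k * qNat q k ^ (m+1)
            = qA q (N+1) k * qNat q k ^ m * qNat q k := by ring
          _ = qA q (N+1) k * qNat q k ^ m * (qNat q (N+1) - q ^ k * qNat q (N+1-k)) := by
              rw [← hsplit]
          _ = _ := by ring
      rw [Finset.sum_congr rfl key, Finset.sum_sub_distrib, ← Finset.mul_sum, ih (N+1)]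
      have e2 : ∑ k ∈ range (N+2), qA q (N+1) k * (q ^ k * qNat q (N+1-k)) * qNat q k ^ m
          = - qStirling q m N := by
        rw [Finset.sum_range_succ]
        simp only [Nat.sub_self, qNat_zero, mul_zero, zero_mul, add_zero]
        rw [← ih N, ← Finset.sum_neg_distrib]
        apply Finset.sum_congr rfl
        intro k hk
        have hk' : k ≤ N := Nat.lt_succ_iff.mp (mem_range.mp hk)
        rw [qA_top hq hk']
        ring
      rw [e2]
      show _ = qStirling q (m+1) (N+1)
      rw [show qStirling q (m+1) (N+1)
          = qNat q (N+1) * qStirling q m (N+1) + qStirling q m N from rfl]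
      ring

lemma qStirling_eq_zero (q : ℝ) : ∀ m j, m < j → qStirling q m j = 0 := by
  intro m
  induction m with
  | zero => intro j hj; rcases j with _ | j; · omega
            · rfl
  | succ m ih =>
    intro j hj
    rcases j with _ | j
    · omega
    · show qNat q (j+1) * qStirling q m (j+1) + qStirling q m j = 0
      rw [ih (j+1) (by omega), ih j (by omega)]
      ring

lemma qStirling_zero_right (q : ℝ) (m : ℕ) (hm : 1 ≤ m) : qStirling q m 0 = 0 := by
  rcases m with _ | m
  · omega
  · rfl


open Filter

/-- The summand of the double series for the moments. -/
noncomputable def qF (q : ℝ) (n m : ℕ) (x : ℝ) (p : ℕ × ℕ) : ℝ :=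
  (qNat q p.1 / qNat q n) ^ m *
      ((q ^ (p.1 * (p.1 - 1) / 2))⁻¹ * (qNat q n ^ p.1 * x ^ p.1 / qFactorial q p.1)) *
    ((-(qNat q n) * q ^ (-(p.1 : ℤ)) * x) ^ p.2 / qFactorial q p.2)

/-- Dominating sequence in the first index. -/
noncomputable def qG (q : ℝ) (n m : ℕ) (x : ℝ) (k : ℕ) : ℝ :=
  ((q - 1) * qNat q n)⁻¹ ^ m *
    ((q ^ m) ^ k * ((q ^ (k * (k - 1) / 2))⁻¹ * ((qNat q n * x) ^ k / qFactorial q k)))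

/-- Dominating sequence in the second index. -/
noncomputable def qH (q : ℝ) (n : ℕ) (x : ℝ) (j : ℕ) : ℝ :=
  (qNat q n * x) ^ j / qFactorial q j

lemma summable_of_zero_ratio {f r : ℕ → ℝ} (hf0 : ∀ k, 0 ≤ f k)
    (hrec : ∀ k, f (k+1) = f k * r k) (hr : Tendsto r atTop (nhds 0)) :
    Summable f := by
  apply summable_of_ratio_norm_eventually_le (r := 1/2) (by norm_num)
  filter_upwards [hr.eventually (gt_mem_nhds (by norm_num : (0:ℝ) < 1/2))] with k hk
  rw [Real.norm_eq_abs, Real.norm_eq_abs, abs_of_nonneg (hf0 _), abs_of_nonneg (hf0 _), hrec k]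
  calc f k * r k ≤ f k * (1/2) := mul_le_mul_of_nonneg_left hk.le (hf0 k)
    _ = 1/2 * f k := by ring

section Main

variable {q : ℝ} {n : ℕ}

lemma qinv_tendsto (hq : 1 < q) (c : ℝ) :
    Tendsto (fun k : ℕ => c * (q⁻¹) ^ k) atTop (nhds 0) := by
  have h0 : (0:ℝ) ≤ q⁻¹ := inv_nonneg.mpr (qM_q_pos hq).le
  have h1 : q⁻¹ < 1 := inv_lt_one_of_one_lt₀ hq
  simpa using (tendsto_pow_atTop_nhds_zero_of_lt_one h0 h1).const_mul c

lemma qH_nonneg (hq : 1 < q) (hn : 1 ≤ n) {x : ℝ} (hx : 0 ≤ x) (j : ℕ) :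
    0 ≤ qH q n x j :=
  div_nonneg (pow_nonneg (mul_nonneg (qNat_nonneg hq n) hx) j) (qFactorial_pos hq j).le

lemma qH_summable (hq : 1 < q) (hn : 1 ≤ n) {x : ℝ} (hx : 0 ≤ x) :
    Summable (qH q n x) := by
  have hbx : 0 ≤ qNat q n * x := mul_nonneg (qNat_nonneg hq n) hx
  apply summable_of_zero_ratio (r := fun j => (qNat q n * x) / qNat q (j+1))
    (qH_nonneg hq hn hx)
  · intro j
    rw [qH, qH, qFactorial_succ, pow_succ]
    field_simp
  · apply squeeze_zero (g := fun j => (qNat q n * x) * (q⁻¹) ^ j)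
    · intro j
      exact div_nonneg hbx (qNat_pos hq (by omega)).le
    · intro j
      rw [inv_pow]
      calc (qNat q n * x) / qNat q (j+1) ≤ (qNat q n * x) / q ^ j := by
            apply div_le_div_of_nonneg_left hbx ?_ (pow_le_qNat_succ hq j)
            · positivity
        _ = (qNat q n * x) * (q ^ j)⁻¹ := div_eq_mul_inv _ _
    · exact qinv_tendsto hq _

lemma qG_nonneg (hq : 1 < q) (hn : 1 ≤ n) {x : ℝ} (hx : 0 ≤ x) (m : ℕ) (k : ℕ) :
    0 ≤ qG q n m x k := by
  have h1 : (0:ℝ) ≤ ((q - 1) * qNat q n)⁻¹ :=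
    inv_nonneg.mpr (mul_nonneg (by linarith) (qNat_nonneg hq n))
  have h2 : (0:ℝ) ≤ (q ^ (k * (k - 1) / 2))⁻¹ := inv_nonneg.mpr (pow_nonneg (qM_q_pos hq).le _)
  have h3 : (0:ℝ) ≤ (qNat q n * x) ^ k / qFactorial q k :=
    div_nonneg (pow_nonneg (mul_nonneg (qNat_nonneg hq n) hx) k) (qFactorial_pos hq k).le
  have h4 : (0:ℝ) ≤ (q ^ m) ^ k := pow_nonneg (pow_nonneg (qM_q_pos hq).le m) k
  exact mul_nonneg (pow_nonneg h1 m) (mul_nonneg h4 (mul_nonneg h2 h3))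

lemma qG_summable (hq : 1 < q) (hn : 1 ≤ n) {x : ℝ} (hx : 0 ≤ x) (m : ℕ) :
    Summable (qG q n m x) := by
  have hbx : 0 ≤ qNat q n * x := mul_nonneg (qNat_nonneg hq n) hx
  apply summable_of_zero_ratio
    (r := fun k => q ^ m * (q⁻¹) ^ k * ((qNat q n * x) / qNat q (k+1)))
    (qG_nonneg hq hn hx m)
  · intro k
    rw [qG, qG, qFactorial_succ, tri_succ' k, pow_add, pow_succ ((q:ℝ) ^ m), pow_succ, inv_pow]
    have h1 : qNat q (k+1) ≠ 0 := qNat_ne hq (by omega)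
    have h2 : qFactorial q k ≠ 0 := qFactorial_ne hq k
    have h3 : (q:ℝ) ^ (k * (k-1) / 2) ≠ 0 := qM_pow_ne hq _
    have h4 : (q:ℝ) ^ k ≠ 0 := qM_pow_ne hq k
    field_simp
    have h5 : q ^ k * q⁻¹ ^ k = 1 := by rw [inv_pow, mul_inv_cancel₀ h4]
    linear_combination (-(qNat q n * qNat q n ^ k * x * x ^ k * q ^ (k * (k - 1) / 2) * (-qNat q n + qNat q n * q)⁻¹ ^ m)) * h5
  · apply squeeze_zero (g := fun k => (q ^ m * (qNat q n * x)) * (q⁻¹) ^ k)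
    · intro k
      have : (0:ℝ) ≤ (q⁻¹) ^ k := pow_nonneg (inv_nonneg.mpr (qM_q_pos hq).le) k
      have h5 : (0:ℝ) ≤ (qNat q n * x) / qNat q (k+1) :=
        div_nonneg hbx (qNat_pos hq (by omega)).le
      positivity
    · intro k
      have h6 : (qNat q n * x) / qNat q (k+1) ≤ qNat q n * x :=
        div_le_self hbx (one_le_qNat_succ hq k)
      have h7 : (0:ℝ) ≤ q ^ m * (q⁻¹) ^ k :=
        mul_nonneg (pow_nonneg (qM_q_pos hq).le m) (pow_nonneg (inv_nonneg.mpr (qM_q_pos hq).le) k)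
      calc q ^ m * (q⁻¹) ^ k * ((qNat q n * x) / qNat q (k+1))
          ≤ q ^ m * (q⁻¹) ^ k * (qNat q n * x) := mul_le_mul_of_nonneg_left h6 h7
        _ = (q ^ m * (qNat q n * x)) * (q⁻¹) ^ k := by ring
    · exact qinv_tendsto hq _

lemma qF_abs_le (hq : 1 < q) (hn : 1 ≤ n) {x : ℝ} (hx : 0 ≤ x) (m : ℕ) (p : ℕ × ℕ) :
    |qF q n m x p| ≤ qG q n m x p.1 * qH q n x p.2 := by
  obtain ⟨k, j⟩ := p
  have hq0 := qM_q_pos hq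
  have hb0 : 0 < qNat q n := qNat_pos hq hn
  have hzk : (0:ℝ) ≤ q ^ (-(k:ℤ)) := zpow_nonneg hq0.le _
  have hA0 : 0 ≤ (qNat q k / qNat q n) ^ m *
      ((q ^ (k * (k - 1) / 2))⁻¹ * (qNat q n ^ k * x ^ k / qFactorial q k)) := by
    apply mul_nonneg (pow_nonneg (div_nonneg (qNat_nonneg hq k) hb0.le) m)
    apply mul_nonneg (inv_nonneg.mpr (pow_nonneg hq0.le _))
    exact div_nonneg (mul_nonneg (pow_nonneg hb0.le _) (pow_nonneg hx _))
      (qFactorial_pos hq _).le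
  have habsbase : |(-(qNat q n) * q ^ (-(k:ℤ)) * x)| = qNat q n * q ^ (-(k:ℤ)) * x := by
    rw [show -(qNat q n) * q ^ (-(k:ℤ)) * x = -(qNat q n * q ^ (-(k:ℤ)) * x) by ring, abs_neg]
    exact abs_of_nonneg (mul_nonneg (mul_nonneg hb0.le hzk) hx)
  have habs : |qF q n m x (k, j)|
      = (qNat q k / qNat q n) ^ m *
          ((q ^ (k * (k - 1) / 2))⁻¹ * (qNat q n ^ k * x ^ k / qFactorial q k)) *
        ((qNat q n * q ^ (-(k:ℤ)) * x) ^ j / qFactorial q j) := by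
    rw [qF, abs_mul, abs_of_nonneg hA0, abs_div, abs_pow, habsbase,
      abs_of_nonneg (qFactorial_pos hq j).le]
  rw [habs]
  have b1 : (qNat q k / qNat q n) ^ m ≤ ((q - 1) * qNat q n)⁻¹ ^ m * (q ^ m) ^ k := by
    have hbase : qNat q k / qNat q n ≤ q ^ k * ((q - 1) * qNat q n)⁻¹ := by
      calc qNat q k / qNat q n ≤ (q ^ k / (q - 1)) / qNat q n := by
            gcongr
            exact qNat_le hq k
        _ = q ^ k * ((q - 1) * qNat q n)⁻¹ := by
            rw [div_div, div_eq_mul_inv]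
    calc (qNat q k / qNat q n) ^ m ≤ (q ^ k * ((q - 1) * qNat q n)⁻¹) ^ m :=
          pow_le_pow_left₀ (div_nonneg (qNat_nonneg hq k) hb0.le) hbase m
      _ = ((q - 1) * qNat q n)⁻¹ ^ m * (q ^ m) ^ k := by
          rw [mul_pow, ← pow_mul, ← pow_mul, Nat.mul_comm k m]
          ring
  have b2 : (qNat q n * q ^ (-(k:ℤ)) * x) ^ j ≤ (qNat q n * x) ^ j := by
    apply pow_le_pow_left₀ (mul_nonneg (mul_nonneg hb0.le hzk) hx)
    have hle1 : q ^ (-(k:ℤ)) ≤ 1 := zpow_le_one_of_nonpos₀ hq.le (by omega)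
    calc qNat q n * q ^ (-(k:ℤ)) * x ≤ qNat q n * 1 * x := by
          gcongr
      _ = qNat q n * x := by ring
  have hmid0 : 0 ≤ (q ^ (k * (k - 1) / 2))⁻¹ * (qNat q n ^ k * x ^ k / qFactorial q k) := by
    apply mul_nonneg (inv_nonneg.mpr (pow_nonneg hq0.le _))
    exact div_nonneg (mul_nonneg (pow_nonneg hb0.le _) (pow_nonneg hx _))
      (qFactorial_pos hq _).le
  have hC0 : 0 ≤ (qNat q n * q ^ (-(k:ℤ)) * x) ^ j / qFactorial q j :=
    div_nonneg (pow_nonneg (mul_nonneg (mul_nonneg hb0.le hzk) hx) j) (qFactorial_pos hq j).le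
  calc (qNat q k / qNat q n) ^ m *
        ((q ^ (k * (k - 1) / 2))⁻¹ * (qNat q n ^ k * x ^ k / qFactorial q k)) *
        ((qNat q n * q ^ (-(k:ℤ)) * x) ^ j / qFactorial q j)
      ≤ (((q - 1) * qNat q n)⁻¹ ^ m * (q ^ m) ^ k) *
        ((q ^ (k * (k - 1) / 2))⁻¹ * (qNat q n ^ k * x ^ k / qFactorial q k)) *
        ((qNat q n * q ^ (-(k:ℤ)) * x) ^ j / qFactorial q j) := by
        apply mul_le_mul_of_nonneg_right (mul_le_mul_of_nonneg_right b1 hmid0) hC0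
    _ ≤ (((q - 1) * qNat q n)⁻¹ ^ m * (q ^ m) ^ k) *
        ((q ^ (k * (k - 1) / 2))⁻¹ * (qNat q n ^ k * x ^ k / qFactorial q k)) *
        ((qNat q n * x) ^ j / qFactorial q j) := by
        apply mul_le_mul_of_nonneg_left
        · exact div_le_div_of_nonneg_right b2 (qFactorial_pos hq j).le
        · apply mul_nonneg (mul_nonneg (pow_nonneg (inv_nonneg.mpr
            (mul_nonneg (by linarith) hb0.le)) m) (pow_nonneg (pow_nonneg hq0.le m) k)) hmid0
    _ = qG q n m x k * qH q n x j := by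
        rw [qG, qH, mul_pow]
        ring

lemma qF_summable (hq : 1 < q) (hn : 1 ≤ n) {x : ℝ} (hx : 0 ≤ x) (m : ℕ) :
    Summable (qF q n m x) := by
  apply Summable.of_abs
  apply Summable.of_nonneg_of_le (fun p => abs_nonneg _) (qF_abs_le hq hn hx m)
  exact (qG_summable hq hn hx m).mul_of_nonneg (qH_summable hq hn hx)
    (qG_nonneg hq hn hx m) (qH_nonneg hq hn hx)

end Main


section Thm

open Finset

/-- explicit representation of the moments via `q`-Stirling-type
numbers: `M_{n,q}(t^m;x) = ∑_{j=1}^m S_q(m,j) x^j/[n]_q^{m-j}`; in particular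
`M_{n,q}(t^m;x)` is a polynomial of degree `m` in `x` without a constant term. -/
theorem qSzasz_moment_formula (q : ℝ) (hq : 1 < q) (n : ℕ) (hn : 1 ≤ n)
    (m : ℕ) (hm : 1 ≤ m) (x : ℝ) (hx : 0 ≤ x) :
    qSzasz q n (fun t => t ^ m) x =
      ∑ j ∈ Finset.Icc 1 m, qStirling q m j * x ^ j / qNat q n ^ (m - j) := by
  have hq0 : (0:ℝ) < q := qM_q_pos hq
  have hqne : q ≠ 0 := qM_q_ne hq
  have hb0 : 0 < qNat q n := qNat_pos hq hn
  have hbne : qNat q n ≠ 0 := ne_of_gt hb0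
  have hFs : Summable (qF q n m x) := qF_summable hq hn hx m
  -- Step 1: expand the double series
  have step1 : qSzasz q n (fun t => t ^ m) x = ∑' (k : ℕ) (j : ℕ), qF q n m x (k, j) := by
    rw [qSzasz]
    apply tsum_congr
    intro k
    have e : (fun t : ℝ => t ^ m) (qNat q k / qNat q n) * qSzaszBasis q n k x
        = ((qNat q k / qNat q n) ^ m *
            ((q ^ (k * (k - 1) / 2))⁻¹ * (qNat q n ^ k * x ^ k / qFactorial q k))) *
          qExp q (-(qNat q n) * q ^ (-(k : ℤ)) * x) := by
      rw [qSzaszBasis]; ring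
    rw [e, qExp, ← tsum_mul_left]
    exact tsum_congr fun j => by simp only [qF]
  -- Step 2: double series as a series over pairs
  have step2 : (∑' (k : ℕ) (j : ℕ), qF q n m x (k, j)) = ∑' p : ℕ × ℕ, qF q n m x p :=
    (Summable.tsum_prod' hFs hFs.prod_factor).symm
  -- Step 3: regroup along antidiagonals
  have hFs' : Summable ((qF q n m x) ∘ (Finset.HasAntidiagonal.sigmaAntidiagonalEquivProd (A := ℕ))) :=
    Finset.HasAntidiagonal.sigmaAntidiagonalEquivProd.summable_iff.mpr hFs
  have step3 : (∑' p : ℕ × ℕ, qF q n m x p)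
      = ∑' N : ℕ, ∑ kj ∈ Finset.HasAntidiagonal.antidiagonal N, qF q n m x kj := by
    rw [← Finset.HasAntidiagonal.sigmaAntidiagonalEquivProd.tsum_eq (qF q n m x)]
    rw [Summable.tsum_sigma' (f := fun c : (Σ N : ℕ, {p : ℕ × ℕ // p ∈ Finset.HasAntidiagonal.antidiagonal N}) =>
      qF q n m x (Finset.HasAntidiagonal.sigmaAntidiagonalEquivProd c))
      (fun N => (hasSum_fintype _).summable) hFs']
    exact tsum_congr fun N => by
      rw [← Finset.tsum_subtype]
      exact tsum_congr fun c => rfl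
  -- Step 4: evaluate each antidiagonal sum
  have step4 : ∀ N : ℕ, ∑ kj ∈ Finset.HasAntidiagonal.antidiagonal N, qF q n m x kj
      = qStirling q m N * x ^ N * (qNat q n ^ N * (qNat q n ^ m)⁻¹) := by
    intro N
    rw [Finset.Nat.sum_antidiagonal_eq_sum_range_succ_mk, ← qT_eq hq m N,
      Finset.sum_mul, Finset.sum_mul]
    apply Finset.sum_congr rfl
    intro k hk
    have hkN : k ≤ N := Nat.lt_succ_iff.mp (Finset.mem_range.mp hk)
    have hzp : (-(qNat q n) * q ^ (-(k:ℤ)) * x) ^ (N - k)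
        = (-1) ^ (N - k) * (qNat q n ^ (N - k) * ((q ^ (k * (N - k)))⁻¹ * x ^ (N - k))) := by
      rw [zpow_neg, zpow_natCast]
      rw [show -(qNat q n) * (q ^ k)⁻¹ * x = -(qNat q n * ((q ^ k)⁻¹ * x)) by ring]
      rw [neg_pow, mul_pow, mul_pow, inv_pow, ← pow_mul]
    have hx1 : x ^ k * x ^ (N - k) = x ^ N := by rw [← pow_add]; congr 1; omega
    have hb1 : qNat q n ^ k * qNat q n ^ (N - k) = qNat q n ^ N := by
      rw [← pow_add]; congr 1; omega
    have t1 := tri_double k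
    have t2 : k * N = k * k + k * (N - k) := by
      rw [← Nat.mul_add]; congr 1; omega
    have harith : k * (k+1) / 2 + (k * (k-1) / 2 + k * (N - k)) = 0 + k * N := by
      rw [Nat.zero_add, t2, ← t1]; ring
    have hqexp : q ^ (k * (k+1) / 2) * (q ^ (k * N))⁻¹
        = (q ^ (k * (k-1) / 2))⁻¹ * (q ^ (k * (N - k)))⁻¹ := by
      conv_rhs => rw [← mul_inv, ← pow_add]
      exact (pow_helper hqne harith).trans (by rw [pow_zero, one_mul])
    simp only [qF]
    rw [hzp, qA, hqexp, ← hx1, ← hb1]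
    ring
  -- Step 5: the series reduces to a finite sum
  have step5 : (∑' N : ℕ, qStirling q m N * x ^ N * (qNat q n ^ N * (qNat q n ^ m)⁻¹))
      = ∑ j ∈ Finset.Icc 1 m, qStirling q m j * x ^ j / qNat q n ^ (m - j) := by
    rw [tsum_eq_sum (s := Finset.Icc 1 m) ?_]
    · apply Finset.sum_congr rfl
      intro j hj
      obtain ⟨hj1, hj2⟩ := Finset.mem_Icc.mp hj
      have hb2 : qNat q n ^ j * (qNat q n ^ m)⁻¹ = (qNat q n ^ (m - j))⁻¹ := by
        have h := pow_helper hbne (a := j) (b := m) (c := 0) (d := m - j) (by omega)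
        rw [h, pow_zero, one_mul]
      rw [hb2, div_eq_mul_inv]
    · intro N hN
      rcases Nat.eq_zero_or_pos N with h0 | h0
      · subst h0
        rw [qStirling_zero_right q m hm]
        ring
      · have hNm : m < N := by
          by_contra hc
          exact hN (Finset.mem_Icc.mpr ⟨h0, by omega⟩)
        rw [qStirling_eq_zero q m N hNm]
        ring
  rw [step1, step2, step3, tsum_congr step4]
  exact step5

end Thm
end

section
/- Let p∈ℕ∪{0} and q>1 be fixed. There exists a positive constant K₁(q,p) such that for all n≥1 and all x∈[0,∞): w_p(x)·M_{n,q}(1/w_p;x) ≤ K₁(q,p), i.e. ‖M_{n,q}(1/w_p)‖_p ≤ K₁(q,p). -/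
open scoped BigOperators

set_option linter.unusedSectionVars false

namespace QAux

/-- triangle number -/
def tri (k : ℕ) : ℕ := k * (k - 1) / 2

lemma tri_eq_choose (k : ℕ) : tri k = k.choose 2 := (Nat.choose_two_right k).symm

lemma tri_succ (k : ℕ) : tri (k + 1) = tri k + k := by
  simp only [tri_eq_choose]
  rw [Nat.choose_succ_succ' k 1]
  simp [Nat.choose_one_right, Nat.add_comm]

lemma tri_add (l m : ℕ) : tri (l + m) = tri l + l * m + tri m := by
  induction m with
  | zero => simp [tri]
  | succ m ih =>
      have : l + (m + 1) = (l + m) + 1 := by omega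
      rw [this, tri_succ, ih, tri_succ]
      ring

variable {q : ℝ} (hq : 1 < q)

section Basic
include hq

lemma q_pos : (0:ℝ) < q := lt_trans one_pos hq
lemma q_ne : q ≠ 0 := ne_of_gt (q_pos hq)
lemma qsub_pos : (0:ℝ) < q - 1 := sub_pos.mpr hq

lemma qNat_nonneg (k : ℕ) : 0 ≤ qNat q k := by
  apply div_nonneg _ (le_of_lt (qsub_pos hq))
  have : (1:ℝ) ≤ q ^ k := one_le_pow₀ hq.le
  linarith

lemma qNat_succ (k : ℕ) : qNat q (k + 1) = qNat q k + q ^ k := by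
  have hne : q - 1 ≠ 0 := ne_of_gt (qsub_pos hq)
  unfold qNat
  have h2 : q ^ (k+1) - 1 = (q ^ k - 1) + q ^ k * (q - 1) := by ring
  rw [h2, add_div, mul_div_assoc, div_self hne, mul_one]

lemma qNat_pos (k : ℕ) : 0 < qNat q (k + 1) := by
  have h := qNat_nonneg hq k
  have : (0:ℝ) < q ^ k := pow_pos (q_pos hq) k
  rw [qNat_succ hq]; linarith

lemma nat_le_qNat (k : ℕ) : (k : ℝ) ≤ qNat q k := by
  induction k with
  | zero => simp [qNat]
  | succ k ih =>
      have : (1:ℝ) ≤ q ^ k := one_le_pow₀ hq.le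
      rw [qNat_succ hq]; push_cast; linarith

lemma one_le_qNat {n : ℕ} (hn : 1 ≤ n) : 1 ≤ qNat q n := by
  have := nat_le_qNat hq n
  have h1 : (1:ℝ) ≤ (n:ℝ) := by exact_mod_cast hn
  linarith

lemma qNat_sub {i k : ℕ} (h : i ≤ k) :
    qNat q k - qNat q i = q ^ i * qNat q (k - i) := by
  unfold qNat
  have h1 : q ^ i * q ^ (k - i) = q ^ k := by
    rw [← pow_add]; congr 1; omega
  rw [div_sub_div_same]
  have h2 : q ^ k - 1 - (q ^ i - 1) = q ^ i * (q ^ (k-i) - 1) := by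
    rw [mul_sub, h1]; ring
  rw [h2, mul_div_assoc]

lemma qFactorial_pos (k : ℕ) : 0 < qFactorial q k := by
  induction k with
  | zero => norm_num [qFactorial]
  | succ k ih => rw [qFactorial]; exact mul_pos ih (qNat_pos hq k)

lemma qFactorial_ne (k : ℕ) : qFactorial q k ≠ 0 := ne_of_gt (qFactorial_pos hq k)

lemma summable_qExp (z : ℝ) : Summable (fun m : ℕ => z ^ m / qFactorial q m) := by
  obtain ⟨N, hN⟩ := exists_nat_ge (2 * |z|)
  apply summable_of_ratio_norm_eventually_le (r := 1/2) (by norm_num)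
  filter_upwards [Filter.eventually_ge_atTop N] with m hm
  have hfp := qFactorial_pos hq m
  have hfp' := qFactorial_pos hq (m + 1)
  have hqn : (m:ℝ) + 1 ≤ qNat q (m + 1) := by
    have := nat_le_qNat hq (m + 1); push_cast at this; linarith
  have hNm : 2 * |z| ≤ (m:ℝ) + 1 := by
    have : (N:ℝ) ≤ (m:ℝ) := by exact_mod_cast hm
    linarith
  have key : |z| ≤ qNat q (m+1) / 2 := by
    have h2 : 2 * |z| ≤ qNat q (m+1) := by linarith
    linarith
  rw [Real.norm_eq_abs, Real.norm_eq_abs, abs_div, abs_div, abs_pow, abs_pow,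
    abs_of_pos hfp, abs_of_pos hfp']
  rw [qFactorial, pow_succ]
  rw [div_le_iff₀ (mul_pos hfp (qNat_pos hq m))]
  have hzm : (0:ℝ) ≤ |z| ^ m / qFactorial q m := by positivity
  calc |z| ^ m * |z| = (|z| ^ m / qFactorial q m) * |z| * qFactorial q m := by
        field_simp
    _ ≤ (|z| ^ m / qFactorial q m) * (qNat q (m+1)/2) * qFactorial q m := by
        apply mul_le_mul_of_nonneg_right _ hfp.le
        exact mul_le_mul_of_nonneg_left key hzm
    _ = 1 / 2 * (|z| ^ m / qFactorial q m) * (qFactorial q m * qNat q (m + 1)) := by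
        ring

lemma hasSum_qExp (z : ℝ) :
    HasSum (fun m : ℕ => z ^ m / qFactorial q m) (qExp q z) :=
  (summable_qExp hq z).hasSum

end Basic

end QAux

namespace QAux

/-- Gaussian binomial via Pascal recursion. -/
noncomputable def qb (q : ℝ) : ℕ → ℕ → ℝ
  | 0, 0 => 1
  | 0, _ + 1 => 0
  | _ + 1, 0 => 1
  | N + 1, m + 1 => q ^ (m + 1) * qb q N (m + 1) + qb q N m

lemma qb_zero_right (q : ℝ) (N : ℕ) : qb q N 0 = 1 := by cases N <;> rfl

lemma qb_eq_zero (q : ℝ) : ∀ {N m : ℕ}, N < m → qb q N m = 0 := by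
  intro N
  induction N with
  | zero => intro m h; match m, h with
            | m + 1, _ => rfl
  | succ N ih =>
      intro m h
      match m, h with
      | m + 1, h =>
          have h1 : N < m + 1 := by omega
          have h2 : N < m := by omega
          show q ^ (m + 1) * qb q N (m + 1) + qb q N m = 0
          rw [ih h1, ih h2]; ring

variable {q : ℝ} (hq : 1 < q)
include hq

lemma qb_mul_fact : ∀ N m : ℕ, m ≤ N →
    qb q N m * qFactorial q m * qFactorial q (N - m) = qFactorial q N := by
  intro N
  induction N with
  | zero =>
      intro m hm
      have h0 : m = 0 := by omega
      subst h0
      show qb q 0 0 * qFactorial q 0 * qFactorial q 0 = qFactorial q 0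
      norm_num [qb, qFactorial]
  | succ N ih =>
      intro m hm
      match m with
      | 0 => simp [qb_zero_right, qFactorial]
      | m + 1 =>
          show (q ^ (m + 1) * qb q N (m + 1) + qb q N m) * qFactorial q (m + 1) *
              qFactorial q (N + 1 - (m + 1)) = qFactorial q (N + 1)
          have hsub : N + 1 - (m + 1) = N - m := by omega
          rw [hsub]
          rcases Nat.lt_or_ge m N with hlt | hge
          · -- m + 1 ≤ N
            have hm1 : m + 1 ≤ N := hlt
            have e1 : qFactorial q (N - m) = qFactorial q (N - (m+1)) * qNat q (N - m) := by
              have : N - m = (N - (m+1)) + 1 := by omega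
              rw [this, qFactorial]
            have e2 : qFactorial q (m + 1) = qFactorial q m * qNat q (m + 1) := rfl
            have key : qNat q (N + 1) = q ^ (m + 1) * qNat q (N - m) + qNat q (m + 1) := by
              have := qNat_sub hq (show m + 1 ≤ N + 1 by omega)
              have hsub2 : N + 1 - (m + 1) = N - m := by omega
              rw [hsub2] at this
              linarith
            have IH1 := ih (m + 1) hm1
            have IH2 := ih m (by omega)
            rw [e2] at IH1
            rw [e1] at IH2
            have hfq : qFactorial q (N + 1) = qFactorial q N * qNat q (N + 1) := rfl
            rw [hfq, key, e1, e2]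
            linear_combination (q ^ (m+1) * qNat q (N - m)) * IH1 + qNat q (m+1) * IH2
          · -- m = N
            have hmN : m = N := by omega
            subst hmN
            rw [qb_eq_zero q (Nat.lt_succ_self m)]
            simp only [Nat.sub_self, mul_zero, zero_mul, zero_add]
            have : qFactorial q (m + 1) = qFactorial q m * qNat q (m + 1) := rfl
            rw [this]
            have IH := ih m le_rfl
            rw [Nat.sub_self] at IH
            show qb q m m * (qFactorial q m * qNat q (m+1)) * qFactorial q 0 = qFactorial q m * qNat q (m+1)
            have h0 : qFactorial q 0 = 1 := rfl
            rw [h0] at IH ⊢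
            linear_combination qNat q (m+1) * IH

/-- the alternating Gauss sum -/
lemma alt_sum (N : ℕ) (hN : 1 ≤ N) :
    ∑ m ∈ Finset.range (N + 1), (-1 : ℝ) ^ m * q ^ tri m * qb q N m = 0 := by
  obtain ⟨M, rfl⟩ : ∃ M, N = M + 1 := ⟨N - 1, by omega⟩
  rw [Finset.sum_range_succ']
  have h0 : (-1 : ℝ) ^ 0 * q ^ tri 0 * qb q (M + 1) 0 = 1 := by
    simp [tri, qb_zero_right]
  rw [h0]
  set g : ℕ → ℝ := fun m => (-1 : ℝ) ^ m * q ^ tri (m + 1) * qb q M m with hg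
  have hterm : ∀ m, (-1 : ℝ) ^ (m + 1) * q ^ tri (m + 1) * qb q (M + 1) (m + 1)
      = g (m + 1) - g m := by
    intro m
    have e : qb q (M + 1) (m + 1) = q ^ (m + 1) * qb q M (m + 1) + qb q M m := rfl
    rw [e, hg]
    simp only []
    have e2 : q ^ tri (m + 2) = q ^ tri (m + 1) * q ^ (m + 1) := by
      rw [← pow_add]; congr 1
      rw [tri_succ (m+1)]
    rw [e2]
    ring
  calc ∑ m ∈ Finset.range (M + 1), (-1:ℝ) ^ (m+1) * q ^ tri (m+1) * qb q (M+1) (m+1) + 1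
      = ∑ m ∈ Finset.range (M + 1), (g (m+1) - g m) + 1 := by
        rw [Finset.sum_congr rfl (fun m _ => hterm m)]
    _ = (g (M + 1) - g 0) + 1 := by rw [Finset.sum_range_sub g]
    _ = 0 := by
        have hgM : g (M + 1) = 0 := by
          rw [hg]; simp only []
          rw [qb_eq_zero q (Nat.lt_succ_self M)]
          ring
        have hg0 : g 0 = 1 := by
          rw [hg]; simp [tri, qb_zero_right]
        rw [hgM, hg0]; ring

end QAux

namespace QAux

variable {q : ℝ} (hq : 1 < q)

section Master
include hq

lemma pow_tri_ne (k : ℕ) : (q : ℝ) ^ tri k ≠ 0 := pow_ne_zero _ (q_ne hq)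

lemma summable_aux (t : ℝ) (ht : 0 ≤ t) :
    Summable (fun l : ℕ => (q ^ tri l)⁻¹ * t ^ l / qFactorial q l) := by
  obtain ⟨N, hN⟩ := (tendsto_pow_atTop_atTop_of_one_lt hq).eventually_ge_atTop (2 * t) |>.exists_forall_of_atTop
  apply summable_of_ratio_norm_eventually_le (r := 1/2) (by norm_num)
  filter_upwards [Filter.eventually_ge_atTop N] with l hl
  have hfp := qFactorial_pos hq l
  have hfp' := qFactorial_pos hq (l + 1)
  have hqp := q_pos hq
  have htp : (0:ℝ) < q ^ tri l := pow_pos hqp _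
  have htp' : (0:ℝ) < q ^ tri (l+1) := pow_pos hqp _
  have h2t : 2 * t ≤ q ^ l := hN l hl
  have h1 : (1:ℝ) ≤ qNat q (l + 1) := one_le_qNat hq (by omega)
  rw [Real.norm_eq_abs, Real.norm_eq_abs, abs_of_nonneg (by positivity), abs_of_nonneg (by positivity)]
  have e1 : (q ^ tri (l+1))⁻¹ * t ^ (l+1) / qFactorial q (l+1)
      = ((q ^ tri l)⁻¹ * t ^ l / qFactorial q l) * (t / (q ^ l * qNat q (l+1))) := by
    have e0 : q ^ tri (l + 1) = q ^ tri l * q ^ l := by rw [← pow_add, tri_succ]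
    have hne1 : qFactorial q l ≠ 0 := qFactorial_ne hq l
    have hne2 : qNat q (l+1) ≠ 0 := ne_of_gt (qNat_pos hq l)
    have hne3 : (q:ℝ) ^ tri l ≠ 0 := pow_tri_ne hq l
    have hne4 : (q:ℝ) ^ l ≠ 0 := pow_ne_zero _ (q_ne hq)
    rw [e0, qFactorial, pow_succ]
    field_simp
  rw [e1]
  rcases le_or_gt t 0 with ht0 | ht0
  · have : t = 0 := le_antisymm ht0 ht
    subst this
    simp
    positivity
  · have hratio : t / (q ^ l * qNat q (l+1)) ≤ 1/2 := by
      rw [div_le_iff₀ (by positivity)]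
      have : q ^ l ≤ q ^ l * qNat q (l + 1) := le_mul_of_one_le_right (by positivity) h1
      linarith
    have hnn : (0:ℝ) ≤ (q ^ tri l)⁻¹ * t ^ l / qFactorial q l := by positivity
    calc (q ^ tri l)⁻¹ * t ^ l / qFactorial q l * (t / (q ^ l * qNat q (l+1)))
        ≤ (q ^ tri l)⁻¹ * t ^ l / qFactorial q l * (1/2) := by
          apply mul_le_mul_of_nonneg_left hratio hnn
      _ = 1/2 * ((q ^ tri l)⁻¹ * t ^ l / qFactorial q l) := by ring

lemma zpow_neg_pow (l m : ℕ) : ((q : ℝ) ^ (-(l:ℤ))) ^ m = (q ^ (l * m))⁻¹ := by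
  have hqne := q_ne hq
  rw [← zpow_natCast ((q : ℝ) ^ (-(l:ℤ))) m, ← zpow_mul]
  have : (-(l:ℤ)) * (m:ℤ) = -((l*m : ℕ) : ℤ) := by push_cast; ring
  rw [this, zpow_neg, zpow_natCast]

/-- The summand of the double series. -/
noncomputable def F (q y : ℝ) (p : ℕ × ℕ) : ℝ :=
  (q ^ tri p.1)⁻¹ * (y ^ p.1 / qFactorial q p.1) *
    ((-(y * q ^ (-(p.1 : ℤ)))) ^ p.2 / qFactorial q p.2)

lemma summable_F (y : ℝ) (hy : 0 ≤ y) : Summable (F q y) := by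
  rw [← summable_abs_iff]
  have hqp := q_pos hq
  apply Summable.of_nonneg_of_le
    (f := fun p : ℕ × ℕ => ((q ^ tri p.1)⁻¹ * y ^ p.1 / qFactorial q p.1) * (y ^ p.2 / qFactorial q p.2))
    (fun p => abs_nonneg _)
  · rintro ⟨l, m⟩
    show |F q y (l, m)| ≤ ((q ^ tri l)⁻¹ * y ^ l / qFactorial q l) * (y ^ m / qFactorial q m)
    have hfl := qFactorial_pos hq l
    have hfm := qFactorial_pos hq m
    have hzp : (0:ℝ) < (q:ℝ) ^ (-(l:ℤ)) := zpow_pos hqp _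
    have hle1 : (q:ℝ) ^ (-(l:ℤ)) ≤ 1 := by
      rw [zpow_neg, zpow_natCast]
      apply inv_le_one_of_one_le₀
      exact one_le_pow₀ hq.le
    have habs : |F q y (l, m)| =
        (q ^ tri l)⁻¹ * (y ^ l / qFactorial q l) * ((y * (q:ℝ) ^ (-(l:ℤ))) ^ m / qFactorial q m) := by
      show |(q ^ tri l)⁻¹ * (y ^ l / qFactorial q l) *
        ((-(y * q ^ (-(l : ℤ)))) ^ m / qFactorial q m)| = _
      simp only [abs_mul, abs_div, abs_pow, abs_neg, abs_inv, abs_of_pos hzp,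
        abs_of_pos hqp, abs_of_nonneg hy, abs_of_pos hfl, abs_of_pos hfm]
    rw [habs]
    have hcore : (y * (q:ℝ) ^ (-(l:ℤ))) ^ m ≤ y ^ m := by
      apply pow_le_pow_left₀ (by positivity)
      exact mul_le_of_le_one_right hy hle1
    have h2 : (0:ℝ) ≤ (q ^ tri l)⁻¹ * (y ^ l / qFactorial q l) := by positivity
    have e : ((q ^ tri l)⁻¹ * y ^ l / qFactorial q l) * (y ^ m / qFactorial q m)
        = (q ^ tri l)⁻¹ * (y ^ l / qFactorial q l) * (y ^ m / qFactorial q m) := by ring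
    rw [e]
    exact mul_le_mul_of_nonneg_left ((div_le_div_iff_of_pos_right hfm).mpr hcore) h2
  · apply (summable_aux hq y hy).mul_of_nonneg (summable_qExp hq y)
    · intro l
      show (0:ℝ) ≤ (q ^ tri l)⁻¹ * y ^ l / qFactorial q l
      exact div_nonneg (by positivity) (qFactorial_pos hq l).le
    · intro m
      show (0:ℝ) ≤ y ^ m / qFactorial q m
      exact div_nonneg (by positivity) (qFactorial_pos hq m).le

end Master

end QAux

namespace QAux

variable {q : ℝ} (hq : 1 < q)

section Master2
include hq

lemma sum_antidiagonal_F (y : ℝ) (N : ℕ) :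
    ∑ p ∈ Finset.HasAntidiagonal.antidiagonal N, F q y p = if N = 0 then 1 else 0 := by
  rcases Nat.eq_zero_or_pos N with rfl | hN
  · simp only [Finset.Nat.antidiagonal_zero, Finset.sum_singleton, if_pos rfl]
    show (q ^ tri 0)⁻¹ * (y ^ 0 / qFactorial q 0) * ((-(y * q ^ (-(0:ℕ) : ℤ))) ^ 0 / qFactorial q 0) = 1
    norm_num [tri, qFactorial]
  · rw [if_neg (by omega)]
    have hterm : ∀ l ∈ Finset.range (N + 1), F q y (l, N - l) =
        (y ^ N * (q ^ tri N)⁻¹ * (qFactorial q N)⁻¹) *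
          ((-1 : ℝ) ^ (N - l) * q ^ tri (N - l) * qb q N (N - l)) := by
      intro l hl
      rw [Finset.mem_range] at hl
      have hlN : l ≤ N := by omega
      set m := N - l with hm
      have hlm : l + m = N := by omega
      have hfact := qb_mul_fact hq N m (by omega)
      have hNm : N - m = l := by omega
      rw [hNm] at hfact
      have hqbne : qb q N m ≠ 0 := by
        intro h
        rw [h, zero_mul, zero_mul] at hfact
        exact (qFactorial_ne hq N) hfact.symm
      have e1 : (-(y * q ^ (-(l:ℤ)))) ^ m = (-1:ℝ) ^ m * (y ^ m * (q ^ (l * m))⁻¹) := by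
        rw [show -(y * q ^ (-(l:ℤ))) = (-1) * (y * q ^ (-(l:ℤ))) by ring, mul_pow, mul_pow,
          zpow_neg_pow hq]
      have e2 : q ^ tri N = q ^ tri l * q ^ (l * m) * q ^ tri m := by
        rw [← pow_add, ← pow_add]
        congr 1
        rw [← hlm, tri_add]
      have e3 : y ^ N = y ^ l * y ^ m := by rw [← pow_add, hlm]
      show (q ^ tri l)⁻¹ * (y ^ l / qFactorial q l) * ((-(y * q ^ (-(l:ℤ)))) ^ m / qFactorial q m) = _
      rw [e1, e2, e3, ← hfact]
      have h1 := qFactorial_ne hq l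
      have h2 := qFactorial_ne hq m
      have h3 := pow_tri_ne hq l
      have h4 := pow_tri_ne hq m
      have h5 : (q : ℝ) ^ (l * m) ≠ 0 := pow_ne_zero _ (q_ne hq)
      field_simp
    rw [Finset.Nat.sum_antidiagonal_eq_sum_range_succ_mk, Finset.sum_congr rfl hterm,
      ← Finset.mul_sum]
    have hrefl : ∑ l ∈ Finset.range (N + 1),
        ((-1 : ℝ) ^ (N - l) * q ^ tri (N - l) * qb q N (N - l))
        = ∑ m ∈ Finset.range (N + 1), ((-1 : ℝ) ^ m * q ^ tri m * qb q N m) := by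
      have := Finset.sum_range_reflect
        (fun m => (-1 : ℝ) ^ m * q ^ tri m * qb q N m) (N + 1)
      simp only [Nat.add_sub_cancel] at this
      exact this
    rw [hrefl, alt_sum hq N hN, mul_zero]

lemma master (y : ℝ) (hy : 0 ≤ y) :
    HasSum (fun l : ℕ => (q ^ tri l)⁻¹ * (y ^ l / qFactorial q l) *
      qExp q (-(y * q ^ (-(l : ℤ))))) 1 := by
  have hsumF := summable_F hq y hy
  have hF : HasSum (F q y) (∑' p, F q y p) := hsumF.hasSum
  have hrow : ∀ l : ℕ, HasSum (fun m => F q y (l, m))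
      ((q ^ tri l)⁻¹ * (y ^ l / qFactorial q l) * qExp q (-(y * q ^ (-(l : ℤ))))) :=
    fun l => (hasSum_qExp hq _).mul_left _
  have hmain := hF.prod_fiberwise hrow
  have hsig : HasSum (fun N : ℕ => ∑ p ∈ Finset.HasAntidiagonal.antidiagonal N, F q y p) (∑' p, F q y p) := by
    have he : HasSum (F q y ∘ (Finset.HasAntidiagonal.sigmaAntidiagonalEquivProd (A := ℕ)))
        (∑' p, F q y p) := (Equiv.hasSum_iff _).mpr hF
    exact he.sigma (fun N => Finset.hasSum _ _)
  rw [funext (sum_antidiagonal_F hq y)] at hsig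
  have h2 : HasSum (fun N : ℕ => if N = 0 then (1:ℝ) else 0) 1 := hasSum_ite_eq 0 1
  rwa [hsig.unique h2] at hmain

end Master2

end QAux

namespace QAux

/-- the `q`-falling factorial `∏ ([k]-[i])`. -/
noncomputable def qFall (q : ℝ) (k j : ℕ) : ℝ :=
  ∏ i ∈ Finset.range j, (qNat q k - qNat q i)

lemma qFall_zero (q : ℝ) (k : ℕ) : qFall q k 0 = 1 := by simp [qFall]

lemma qFall_succ (q : ℝ) (k j : ℕ) :
    qFall q k (j + 1) = qFall q k j * (qNat q k - qNat q j) := by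
  rw [qFall, Finset.prod_range_succ, ← qFall]

lemma qFall_eq_zero (q : ℝ) {k j : ℕ} (h : k < j) : qFall q k j = 0 := by
  apply Finset.prod_eq_zero (Finset.mem_range.mpr h)
  exact sub_self _

variable {q : ℝ} (hq : 1 < q)

lemma qStirling_eq_zero (q : ℝ) : ∀ {m j : ℕ}, m < j → qStirling q m j = 0 := by
  intro m
  induction m with
  | zero => intro j h
            match j, h with
            | j + 1, _ => rfl
  | succ m ih =>
      intro j h
      match j, h with
      | j + 1, h =>
          show qNat q (j + 1) * qStirling q m (j + 1) + qStirling q m j = 0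
          rw [ih (by omega), ih (by omega)]
          ring

include hq

lemma qStirling_nonneg : ∀ m j : ℕ, 0 ≤ qStirling q m j := by
  intro m
  induction m with
  | zero => intro j
            match j with
            | 0 => norm_num [qStirling]
            | j + 1 => norm_num [qStirling]
  | succ m ih =>
      intro j
      match j with
      | 0 => norm_num [qStirling]
      | j + 1 =>
          show 0 ≤ qNat q (j + 1) * qStirling q m (j + 1) + qStirling q m j
          have h1 := qNat_nonneg hq (j + 1)
          have h2 := ih (j + 1)
          have h3 := ih j
          positivity

lemma qFall_fact : ∀ (j l : ℕ),
    qFall q (l + j) j * qFactorial q l = q ^ tri j * qFactorial q (l + j) := by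
  intro j
  induction j with
  | zero => intro l; simp [qFall_zero, tri]
  | succ j ih =>
      intro l
      have e1' : l + (j + 1) = (l + 1) + j := by omega
      rw [e1', qFall_succ]
      have hsub : qNat q ((l + 1) + j) - qNat q j = q ^ j * qNat q (l + 1) := by
        have h := qNat_sub hq (show j ≤ (l + 1) + j by omega)
        have : (l + 1) + j - j = l + 1 := by omega
        rwa [this] at h
      have IH := ih (l + 1)
      rw [show qFactorial q (l + 1) = qFactorial q l * qNat q (l + 1) from rfl] at IH
      rw [hsub, tri_succ, pow_add]
      linear_combination q ^ j * IH

lemma qNat_pow_eq_sum (m k : ℕ) :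
    qNat q k ^ m = ∑ j ∈ Finset.range (m + 1), qStirling q m j * qFall q k j := by
  induction m with
  | zero => simp [qFall_zero, qStirling]
  | succ m ih =>
      have key : ∀ j, qNat q k * qFall q k j = qFall q k (j + 1) + qNat q j * qFall q k j := by
        intro j
        rw [qFall_succ]
        ring
      have step1 : qNat q k ^ (m + 1)
          = ∑ j ∈ Finset.range (m + 1), qStirling q m j *
              (qFall q k (j + 1) + qNat q j * qFall q k j) := by
        rw [pow_succ, ih, Finset.sum_mul]
        apply Finset.sum_congr rfl
        intro j _
        rw [← key j]
        ring
      rw [step1]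
      rw [Finset.sum_range_succ' (fun j => qStirling q (m+1) j * qFall q k j) (m + 1)]
      have h0 : qStirling q (m + 1) 0 * qFall q k 0 = 0 := by
        show (0:ℝ) * qFall q k 0 = 0
        ring
      rw [h0, add_zero]
      have hsplit : ∀ j ∈ Finset.range (m + 1),
          qStirling q (m+1) (j+1) * qFall q k (j+1)
          = qNat q (j+1) * qStirling q m (j+1) * qFall q k (j+1)
            + qStirling q m j * qFall q k (j+1) := by
        intro j _
        show (qNat q (j + 1) * qStirling q m (j + 1) + qStirling q m j) * qFall q k (j+1) = _
        ring
      rw [Finset.sum_congr rfl hsplit, Finset.sum_add_distrib]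
      have hA : ∑ j ∈ Finset.range (m + 1), qNat q (j+1) * qStirling q m (j+1) * qFall q k (j+1)
          = ∑ j ∈ Finset.range (m + 1), qStirling q m j * (qNat q j * qFall q k j) := by
        rw [Finset.sum_range_succ' (fun j => qStirling q m j * (qNat q j * qFall q k j)) m]
        have hz : qStirling q m 0 * (qNat q 0 * qFall q k 0) = 0 := by
          have : qNat q 0 = 0 := by simp [qNat]
          rw [this]; ring
        rw [hz, add_zero]
        rw [Finset.sum_range_succ (fun j => qNat q (j+1) * qStirling q m (j+1) * qFall q k (j+1)) m]
        rw [qStirling_eq_zero q (Nat.lt_succ_self m)]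
        have : ∀ j ∈ Finset.range m, qNat q (j+1) * qStirling q m (j+1) * qFall q k (j+1)
            = qStirling q m (j+1) * (qNat q (j+1) * qFall q k (j+1)) := by
          intro j _; ring
        rw [Finset.sum_congr rfl this]
        ring
      rw [hA, ← Finset.sum_add_distrib]
      apply Finset.sum_congr rfl
      intro j _
      ring

/-- Main moment identity. -/
lemma hasSum_fall (n j : ℕ) (x : ℝ) (hx : 0 ≤ x) :
    HasSum (fun k => qFall q k j * qSzaszBasis q n k x) (qNat q n ^ j * x ^ j) := by
  have hqp := q_pos hq
  have hnn := qNat_nonneg hq n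
  have hy : 0 ≤ qNat q n * x * (q : ℝ) ^ (-(j:ℤ)) := by positivity
  have H := (master hq _ hy).mul_left (qNat q n ^ j * x ^ j)
  rw [mul_one] at H
  have heq : ∀ l : ℕ, qFall q (l + j) j * qSzaszBasis q n (l + j) x
      = (qNat q n ^ j * x ^ j) * ((q ^ tri l)⁻¹ *
          ((qNat q n * x * (q:ℝ) ^ (-(j:ℤ))) ^ l / qFactorial q l) *
          qExp q (-((qNat q n * x * (q:ℝ) ^ (-(j:ℤ))) * q ^ (-(l : ℤ))))) := by
    intro l
    have hqne := q_ne hq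
    have harg : -(qNat q n) * (q:ℝ) ^ (-((l + j : ℕ) : ℤ)) * x
        = -((qNat q n * x * (q:ℝ) ^ (-(j:ℤ))) * q ^ (-(l : ℤ))) := by
      have : (-((l + j : ℕ) : ℤ)) = (-(j:ℤ)) + (-(l:ℤ)) := by push_cast; ring
      rw [this, zpow_add₀ hqne]
      ring
    show qFall q (l + j) j * ((q ^ tri (l + j))⁻¹ *
        (qNat q n ^ (l + j) * x ^ (l + j) / qFactorial q (l + j)) *
        qExp q (-(qNat q n) * q ^ (-((l + j : ℕ) : ℤ)) * x)) = _
    rw [harg]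
    have hfact := qFall_fact hq j l
    have e1 : (qNat q n * x * (q:ℝ) ^ (-(j:ℤ))) ^ l
        = qNat q n ^ l * x ^ l * (q ^ (j * l))⁻¹ := by
      rw [mul_pow, mul_pow, zpow_neg_pow hq]
    have e2 : q ^ tri (l + j) = q ^ tri l * q ^ (l * j) * q ^ tri j := by
      rw [← pow_add, ← pow_add, tri_add]
    have e3 : qNat q n ^ (l + j) = qNat q n ^ l * qNat q n ^ j := pow_add _ _ _
    have e4 : x ^ (l + j) = x ^ l * x ^ j := pow_add _ _ _
    -- from hfact : qFall * [l]! = q^tri j * [l+j]!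
    have hflne := qFactorial_ne hq l
    have hfljne := qFactorial_ne hq (l + j)
    have h3 := pow_tri_ne hq l
    have h4 := pow_tri_ne hq j
    have h5 : (q : ℝ) ^ (l * j) ≠ 0 := pow_ne_zero _ hqne
    have h6 : (q : ℝ) ^ (j * l) ≠ 0 := pow_ne_zero _ hqne
    have h7 : (q : ℝ) ^ (l * j) = q ^ (j * l) := by rw [mul_comm]
    rw [e1, e2, e3, e4]
    have hfall : qFall q (l + j) j = q ^ tri j * qFactorial q (l + j) / qFactorial q l := by
      rw [eq_div_iff hflne]; exact hfact
    rw [hfall, h7]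
    field_simp
  have H2 : HasSum (fun l => qFall q (l + j) j * qSzaszBasis q n (l + j) x)
      (qNat q n ^ j * x ^ j) := by
    rw [funext heq]; exact H
  have H3 := (hasSum_nat_add_iff (f := fun k => qFall q k j * qSzaszBasis q n k x) j).mp H2
  have hzero : ∑ i ∈ Finset.range j, qFall q i j * qSzaszBasis q n i x = 0 := by
    apply Finset.sum_eq_zero
    intro i hi
    rw [Finset.mem_range] at hi
    rw [qFall_eq_zero q hi, zero_mul]
  rwa [hzero, add_zero] at H3

end QAux

namespace QAux

lemma pow_le_one_add_pow {x : ℝ} (hx : 0 ≤ x) {j p : ℕ} (hj : j ≤ p) :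
    x ^ j ≤ 1 + x ^ p := by
  rcases le_total x 1 with h | h
  · have h1 : x ^ j ≤ 1 := pow_le_one₀ hx h
    have h2 : (0:ℝ) ≤ x ^ p := by positivity
    linarith
  · have h1 : x ^ j ≤ x ^ p := pow_le_pow_right₀ h hj
    linarith

end QAux


open QAux

/-- `‖M_{n,q}(1/w_p)‖_p ≤ K₁(q,p)` uniformly in `n`. -/
theorem qSzasz_weight_bound (p : ℕ) (q : ℝ) (hq : 1 < q) :
    ∃ K : ℝ, 0 < K ∧ ∀ n : ℕ, 1 ≤ n → ∀ x : ℝ, 0 ≤ x →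
      weight p x * qSzasz q n (fun t => (weight p t)⁻¹) x ≤ K := by

  have hC0 : (0:ℝ) ≤ ∑ j ∈ Finset.range (p + 1), qStirling q p j :=
    Finset.sum_nonneg fun j _ => qStirling_nonneg hq p j
  set C : ℝ := ∑ j ∈ Finset.range (p + 1), qStirling q p j with hC
  refine ⟨1 + C, by linarith, ?_⟩
  intro n hn x hx
  have hn1 : 1 ≤ qNat q n := one_le_qNat hq hn
  have hn0 : (0:ℝ) < qNat q n := lt_of_lt_of_le one_pos hn1
  rcases Nat.eq_zero_or_pos p with rfl | hp
  · -- p = 0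
    have hw : ∀ t : ℝ, weight 0 t = 1 := fun t => if_pos rfl
    have H := hasSum_fall hq n 0 x hx
    have heq : (fun k => (weight 0 (qNat q k / qNat q n))⁻¹ * qSzaszBasis q n k x)
        = fun k => qFall q k 0 * qSzaszBasis q n k x := by
      funext k
      rw [hw, qFall_zero, inv_one]
    have hval : qSzasz q n (fun t => (weight 0 t)⁻¹) x = 1 := by
      show (∑' k : ℕ, (weight 0 (qNat q k / qNat q n))⁻¹ * qSzaszBasis q n k x) = 1
      rw [heq]
      have := H.tsum_eq
      simpa using this
    rw [hval, hw, one_mul]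
    linarith
  · -- p ≥ 1
    have hp' : p ≠ 0 := by omega
    have hwx : weight p x = (1 + x ^ p)⁻¹ := if_neg hp'
    have hxp : (0:ℝ) < 1 + x ^ p := by positivity
    set D : ℕ → ℝ := fun j => (if j = 0 then (1:ℝ) else 0) + qStirling q p j * ((qNat q n) ^ p)⁻¹
      with hD
    have hfeq : ∀ k : ℕ, (weight p (qNat q k / qNat q n))⁻¹
        = ∑ j ∈ Finset.range (p + 1), D j * qFall q k j := by
      intro k
      have h1 : weight p (qNat q k / qNat q n) = (1 + (qNat q k / qNat q n) ^ p)⁻¹ := if_neg hp'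
      rw [h1, inv_inv, div_pow, qNat_pow_eq_sum hq p k]
      rw [hD]
      simp only [add_mul, Finset.sum_add_distrib, ite_mul, one_mul, zero_mul]
      rw [Finset.sum_ite_eq' (Finset.range (p + 1)) 0 (fun j => qFall q k j)]
      rw [if_pos (Finset.mem_range.mpr (by omega))]
      rw [qFall_zero, Finset.sum_div]
      congr 1
      apply Finset.sum_congr rfl
      intro j _
      rw [div_eq_mul_inv]
      ring
    have hhs : HasSum (fun k => (weight p (qNat q k / qNat q n))⁻¹ * qSzaszBasis q n k x)
        (∑ j ∈ Finset.range (p + 1), D j * (qNat q n ^ j * x ^ j)) := by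
      have : (fun k => (weight p (qNat q k / qNat q n))⁻¹ * qSzaszBasis q n k x)
          = fun k => ∑ j ∈ Finset.range (p + 1), D j * (qFall q k j * qSzaszBasis q n k x) := by
        funext k
        rw [hfeq k, Finset.sum_mul]
        apply Finset.sum_congr rfl
        intro j _
        ring
      rw [this]
      exact hasSum_sum fun j _ => (hasSum_fall hq n j x hx).mul_left (D j)
    have hval : qSzasz q n (fun t => (weight p t)⁻¹) x
        = ∑ j ∈ Finset.range (p + 1), D j * (qNat q n ^ j * x ^ j) := hhs.tsum_eq
    rw [hval]
    have hVle : ∑ j ∈ Finset.range (p + 1), D j * (qNat q n ^ j * x ^ j)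
        ≤ 1 + C * (1 + x ^ p) := by
      have hterm : ∀ j ∈ Finset.range (p + 1), D j * (qNat q n ^ j * x ^ j)
          ≤ (if j = 0 then (1:ℝ) else 0) + qStirling q p j * (1 + x ^ p) := by
        intro j hj
        rw [Finset.mem_range] at hj
        have hjp : j ≤ p := by omega
        have hS := qStirling_nonneg hq p j
        have hxj : (0:ℝ) ≤ x ^ j := by positivity
        have hpow : qNat q n ^ j ≤ qNat q n ^ p := pow_le_pow_right₀ hn1 hjp
        have hnp : (0:ℝ) < qNat q n ^ p := by positivity
        have hinv : ((qNat q n) ^ p)⁻¹ * qNat q n ^ j ≤ 1 := by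
          rw [← div_eq_inv_mul, div_le_one hnp]
          exact hpow
        have hxle : x ^ j ≤ 1 + x ^ p := pow_le_one_add_pow hx hjp
        rw [hD]
        simp only [add_mul]
        apply add_le_add
        · rcases eq_or_ne j 0 with rfl | hj0
          · simp
          · rw [if_neg hj0]
            simp
        · have step1 : qStirling q p j * ((qNat q n) ^ p)⁻¹ * (qNat q n ^ j * x ^ j)
              = qStirling q p j * ((((qNat q n) ^ p)⁻¹ * qNat q n ^ j) * x ^ j) := by ring
          rw [step1]
          apply mul_le_mul_of_nonneg_left _ hS
          calc (((qNat q n) ^ p)⁻¹ * qNat q n ^ j) * x ^ j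
              ≤ 1 * x ^ j := mul_le_mul_of_nonneg_right hinv hxj
            _ = x ^ j := one_mul _
            _ ≤ 1 + x ^ p := hxle
      calc ∑ j ∈ Finset.range (p + 1), D j * (qNat q n ^ j * x ^ j)
          ≤ ∑ j ∈ Finset.range (p + 1),
              ((if j = 0 then (1:ℝ) else 0) + qStirling q p j * (1 + x ^ p)) :=
            Finset.sum_le_sum hterm
        _ = 1 + C * (1 + x ^ p) := by
            rw [Finset.sum_add_distrib]
            congr 1
            · rw [Finset.sum_ite_eq' (Finset.range (p + 1)) 0 (fun _ => (1:ℝ))]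
              rw [if_pos (Finset.mem_range.mpr (by omega))]
            · rw [hC, Finset.sum_mul]
    have hw0 : (0:ℝ) ≤ weight p x := by rw [hwx]; positivity
    calc weight p x * ∑ j ∈ Finset.range (p + 1), D j * (qNat q n ^ j * x ^ j)
        ≤ weight p x * (1 + C * (1 + x ^ p)) := mul_le_mul_of_nonneg_left hVle hw0
      _ = (1 + x ^ p)⁻¹ + C * ((1 + x ^ p)⁻¹ * (1 + x ^ p)) := by rw [hwx]; ring
      _ = (1 + x ^ p)⁻¹ + C := by rw [inv_mul_cancel₀ (ne_of_gt hxp), mul_one]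
      _ ≤ 1 + C := by
          have : (1 + x ^ p)⁻¹ ≤ 1 := by
            rw [inv_le_one_iff₀]
            right
            have : (0:ℝ) ≤ x ^ p := by positivity
            linarith
          linarith
end
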